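/- Fix α ∈ (0,1) and λ > 0. Let J^{B(n)} = 1/n + (1/n) ∑_{j=1}^{M^{(n)}-1} Z_j, where Z_j are i.i.d. Sibuya(α) and M^{(n)} is an independent geometric random variable with success probability p_n satisfying p_n/(1-p_n) = λ/n^α. Then for every s ≥ 0, lim_{n→∞} E[e^{-s J^{B(n)}}] = λ/(λ + s^α), the Laplace transform of the Mittag-Leffler distribution. -/

import Mathlib

open MeasureTheory ProbabilityTheory Filter

/-- Generalized binomial coefficient `binom(x, k) = x(x-1)⋯(x-k+1)/k!` for real `x`. -/
noncomputable def gbinom (x : ℝ) (k : ℕ) : ℝ :=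
  (∏ i ∈ Finset.range k, (x - i)) / (Nat.factorial k)

/-- Sibuya(α) probability mass function. -/
noncomputable def sibuya (α : ℝ) (k : ℕ) : ℝ :=
  if k = 0 then 0 else (-1 : ℝ) ^ (k - 1) * gbinom α k

noncomputable def bcoef (α : ℝ) (k : ℕ) : ℝ := (-1 : ℝ) ^ k * gbinom α k

lemma gbinom_zero (x : ℝ) : gbinom x 0 = 1 := by simp [gbinom]

lemma gbinom_succ (x : ℝ) (k : ℕ) :
    gbinom x (k + 1) = gbinom x k * (x - k) / (k + 1) := by
  have hk : (Nat.factorial k : ℝ) ≠ 0 := Nat.cast_ne_zero.2 (Nat.factorial_ne_zero k)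
  have hk1 : ((k : ℝ) + 1) ≠ 0 := by positivity
  simp only [gbinom]
  rw [Finset.prod_range_succ, Nat.factorial_succ]
  push_cast
  rw [div_mul_eq_mul_div, div_div, mul_comm ((k:ℝ)+1)]

lemma bcoef_zero (α : ℝ) : bcoef α 0 = 1 := by simp [bcoef, gbinom_zero]

lemma bcoef_succ (α : ℝ) (k : ℕ) :
    bcoef α (k + 1) = bcoef α k * (((k : ℝ) - α) / (k + 1)) := by
  simp only [bcoef, gbinom_succ, pow_succ]
  ring

lemma abs_bcoef_le_one {α : ℝ} (hα : α ∈ Set.Ioo (0 : ℝ) 1) (k : ℕ) :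
    |bcoef α k| ≤ 1 := by
  induction k with
  | zero => simp [bcoef_zero]
  | succ k ih =>
    rw [bcoef_succ, abs_mul]
    have h1 : |((k : ℝ) - α) / (k + 1)| ≤ 1 := by
      rw [abs_div, abs_of_pos (by positivity : (0:ℝ) < (k:ℝ) + 1)]
      rw [div_le_one (by positivity)]
      rw [abs_le]
      constructor
      · nlinarith [hα.2, Nat.cast_nonneg (α := ℝ) k]
      · nlinarith [hα.1]
    calc |bcoef α k| * |((k : ℝ) - α) / (k + 1)| ≤ 1 * 1 :=
          mul_le_mul ih h1 (abs_nonneg _) zero_le_one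
      _ = 1 := by ring

lemma summable_bcoef_mul {α : ℝ} (hα : α ∈ Set.Ioo (0 : ℝ) 1) {y : ℝ} (hy : |y| < 1)
    (c : ℕ → ℝ) (hc : ∀ k, |c k| ≤ (k : ℝ) + 1) :
    Summable (fun k => c k * (bcoef α k * y ^ k)) := by
  refine Summable.of_norm_bounded (g := fun k => ((k : ℝ) + 1) * |y| ^ k) ?_ ?_
  · have h1 := summable_pow_mul_geometric_of_norm_lt_one (R := ℝ) 1 (r := |y|)
      (by rwa [Real.norm_eq_abs, abs_abs])
    have h2 := summable_geometric_of_lt_one (abs_nonneg y) hy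
    exact (h1.add h2).congr (fun k => by ring)
  · intro k
    rw [Real.norm_eq_abs, abs_mul, abs_mul, abs_pow]
    calc |c k| * (|bcoef α k| * |y| ^ k) ≤ ((k : ℝ) + 1) * (1 * |y| ^ k) := by
          apply mul_le_mul (hc k) _ (by positivity) (by positivity)
          exact mul_le_mul_of_nonneg_right (abs_bcoef_le_one hα k) (by positivity)
      _ = ((k : ℝ) + 1) * |y| ^ k := by ring

lemma binom_tsum {α : ℝ} (hα : α ∈ Set.Ioo (0 : ℝ) 1) {x : ℝ} (hx : x ∈ Set.Ico (0 : ℝ) 1) :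
    ∑' k, bcoef α k * x ^ k = (1 - x) ^ α := by
  obtain ⟨hx0, hx1⟩ := hx
  set r : ℝ := (1 + x) / 2 with hr_def
  have hxr : x < r := by simp only [hr_def]; linarith
  have hr1 : r < 1 := by simp only [hr_def]; linarith
  have hr0 : 0 < r := by simp only [hr_def]; linarith
  set t : Set ℝ := Set.Ioo (-r) r with ht_def
  have ht_open : IsOpen t := isOpen_Ioo
  have ht_conn : IsPreconnected t := isPreconnected_Ioo
  have h0t : (0 : ℝ) ∈ t := ⟨by linarith, hr0⟩
  -- series and its derivative series
  set S : ℝ → ℝ := fun y => ∑' k, bcoef α k * y ^ k with hS_def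
  set u : ℕ → ℝ := fun k => r⁻¹ * (((k : ℝ) ^ 1) * r ^ k) with hu_def
  have hu : Summable u := by
    exact (summable_pow_mul_geometric_of_norm_lt_one (R := ℝ) 1
      (by rw [Real.norm_eq_abs, abs_of_pos hr0]; exact hr1)).mul_left _
  have hg : ∀ k : ℕ, ∀ y ∈ t, HasDerivAt (fun z => bcoef α k * z ^ k)
      (bcoef α k * ((k : ℝ) * y ^ (k - 1))) y := fun k y _ => (hasDerivAt_pow k y).const_mul _
  have hg' : ∀ k : ℕ, ∀ y ∈ t, ‖bcoef α k * ((k : ℝ) * y ^ (k - 1))‖ ≤ u k := by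
    intro k y hy
    have hyr : |y| ≤ r := by
      rw [abs_le]; exact ⟨le_of_lt hy.1, le_of_lt hy.2⟩
    rw [Real.norm_eq_abs, abs_mul, abs_mul, abs_pow]
    match k with
    | 0 => simp [hu_def, hr0.le]
    | (j+1) =>
      have h1 : |y| ^ j ≤ r ^ j := pow_le_pow_left₀ (abs_nonneg y) hyr j
      have h2 : |bcoef α (j+1)| ≤ 1 := abs_bcoef_le_one hα _
      have : u (j+1) = ((j : ℝ) + 1) * r ^ j := by
        simp only [hu_def, pow_one, Nat.cast_add, Nat.cast_one]
        rw [pow_succ']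
        field_simp
      rw [this]
      simp only [Nat.add_sub_cancel, Nat.cast_add, Nat.cast_one, abs_of_pos
        (by positivity : (0:ℝ) < (j:ℝ)+1)]
      calc |bcoef α (j+1)| * (((j:ℝ)+1) * |y| ^ j) ≤ 1 * (((j:ℝ)+1) * r ^ j) := by
            apply mul_le_mul h2 _ (by positivity) zero_le_one
            exact mul_le_mul_of_nonneg_left h1 (by positivity)
        _ = ((j:ℝ)+1) * r ^ j := one_mul _
  have hg0 : Summable fun k => bcoef α k * (0 : ℝ) ^ k := by
    apply summable_of_ne_finset_zero (s := {0})
    intro k hk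
    have : k ≠ 0 := by simpa using hk
    simp [zero_pow this]
  have hderivS : ∀ y ∈ t, HasDerivAt S
      (∑' k, bcoef α k * ((k : ℝ) * y ^ (k - 1))) y := by
    intro y hy
    exact hasDerivAt_tsum_of_isPreconnected hu ht_open ht_conn hg hg' h0t hg0 hy
  have habs : ∀ y ∈ t, |y| < 1 := fun y hy => lt_trans (abs_lt.2 ⟨hy.1, hy.2⟩) hr1
  have hsum : ∀ (c : ℕ → ℝ), (∀ k, |c k| ≤ (k : ℝ) + 1) → ∀ y ∈ t,
      Summable fun k => c k * (bcoef α k * y ^ k) :=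
    fun c hc y hy => summable_bcoef_mul hα (habs y hy) c hc
  -- the ODE
  have hODE : ∀ y ∈ t, (1 - y) * (∑' k, bcoef α k * ((k : ℝ) * y ^ (k - 1))) = -α * S y := by
    intro y hy
    set D : ℝ := ∑' k, bcoef α k * ((k : ℝ) * y ^ (k - 1)) with hD_def
    have hSummD : Summable (fun k => bcoef α k * ((k : ℝ) * y ^ (k - 1))) :=
      Summable.of_norm_bounded (g := u) hu (fun k => hg' k y hy)
    have hcsub : ∀ k : ℕ, |((k : ℝ) - α)| ≤ (k : ℝ) + 1 := by
      intro k
      rw [abs_le]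
      constructor
      · nlinarith [hα.2, Nat.cast_nonneg (α := ℝ) k]
      · nlinarith [hα.1]
    have hs1 : Summable fun j : ℕ => ((j : ℝ) - α) * (bcoef α j * y ^ j) :=
      hsum _ hcsub y hy
    have hs2 : Summable fun j : ℕ => (j : ℝ) * (bcoef α j * y ^ j) :=
      hsum _ (fun k => by
        rw [abs_of_nonneg (Nat.cast_nonneg k)]; linarith) y hy
    have e1 : D = ∑' j : ℕ, ((j : ℝ) - α) * (bcoef α j * y ^ j) := by
      rw [hD_def, hSummD.tsum_eq_zero_add]
      simp only [Nat.cast_zero, zero_mul, mul_zero, zero_add, Nat.add_sub_cancel]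
      apply tsum_congr
      intro j
      rw [bcoef_succ]
      have hj1 : ((j : ℝ) + 1) ≠ 0 := by positivity
      push_cast
      field_simp
    have e2 : y * D = ∑' j : ℕ, (j : ℝ) * (bcoef α j * y ^ j) := by
      rw [hD_def, ← tsum_mul_left]
      apply tsum_congr
      intro k
      match k with
      | 0 => simp
      | (j+1) =>
        rw [Nat.add_sub_cancel, pow_succ]
        push_cast
        ring
    calc (1 - y) * D = D - y * D := by ring
      _ = ∑' j : ℕ, (((j : ℝ) - α) * (bcoef α j * y ^ j) - (j : ℝ) * (bcoef α j * y ^ j)) := by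
          rw [e2, e1]; exact (hs1.tsum_sub hs2).symm
      _ = ∑' j : ℕ, (-α) * (bcoef α j * y ^ j) := tsum_congr fun j => by ring
      _ = -α * S y := tsum_mul_left
  -- derivative of φ is zero on t
  set φ : ℝ → ℝ := fun y => S y * (1 - y) ^ (-α) with hφ_def
  have hφderiv : ∀ y ∈ t, HasDerivAt φ 0 y := by
    intro y hy
    have h1y : 0 < 1 - y := by
      have := hy.2; simp only [ht_def, Set.mem_Ioo] at hy; linarith [hy.2, hr1]
    have hbase : HasDerivAt (fun z : ℝ => 1 - z) (-1) y := (hasDerivAt_id y).const_sub 1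
    have hR : HasDerivAt (fun z : ℝ => (1 - z) ^ (-α)) (α * (1 - y) ^ (-α - 1)) y := by
      have h := HasDerivAt.comp y
        (Real.hasDerivAt_rpow_const (x := 1 - y) (p := -α) (Or.inl h1y.ne')) hbase
      simp only [Function.comp_def] at h
      rw [show α * (1 - y) ^ (-α - 1) = -α * (1 - y) ^ (-α - 1) * -1 by ring]
      exact h
    have h := (hderivS y hy).mul hR
    have hzero : (∑' k, bcoef α k * ((k : ℝ) * y ^ (k - 1))) * (1 - y) ^ (-α)
        + S y * (α * (1 - y) ^ (-α - 1)) = 0 := by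
      have hsplit : ((1 : ℝ) - y) ^ (-α) = (1 - y) * (1 - y) ^ (-α - 1) := by
        have h2 : ((1 : ℝ) - y) ^ ((1 : ℝ) + (-α - 1)) = (1 - y) ^ (1 : ℝ) * (1 - y) ^ (-α - 1) :=
          Real.rpow_add h1y 1 (-α - 1)
        rw [show (1 : ℝ) + (-α - 1) = -α by ring, Real.rpow_one] at h2
        exact h2
      rw [hsplit]
      have hh := hODE y hy
      linear_combination ((1 - y) ^ (-α - 1)) * hh
    rw [hzero] at h
    exact h
  -- constancy on [0, x]
  have hmem : ∀ y, y ∈ Set.Icc (0 : ℝ) x → y ∈ t := by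
    intro y hy
    exact ⟨by linarith [hy.1], lt_of_le_of_lt hy.2 hxr⟩
  have hcont : ContinuousOn φ (Set.Icc 0 x) :=
    fun y hy => ((hφderiv y (hmem y hy)).continuousAt).continuousWithinAt
  have hder : ∀ y ∈ Set.Ico (0 : ℝ) x, HasDerivWithinAt φ 0 (Set.Ici y) y := by
    intro y hy
    exact (hφderiv y (hmem y ⟨hy.1, hy.2.le⟩)).hasDerivWithinAt
  have hconst := constant_of_has_deriv_right_zero hcont hder x ⟨hx0, le_refl x⟩
  have hS0 : S 0 = 1 := by
    have hrfl : S 0 = ∑' k, bcoef α k * (0 : ℝ) ^ k := rfl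
    rw [hrfl, tsum_eq_single 0 (fun k hk => by simp [zero_pow hk])]
    simp [bcoef_zero]
  have hφ0 : φ 0 = 1 := by
    simp [hφ_def, hS0, Real.one_rpow]
  rw [hφ0] at hconst
  have hpos : 0 < 1 - x := by linarith
  have hne : ((1 : ℝ) - x) ^ α ≠ 0 := (Real.rpow_pos_of_pos hpos α).ne'
  have : S x * ((1 - x) ^ α)⁻¹ = 1 := by
    rw [← Real.rpow_neg hpos.le]
    exact hconst
  rw [mul_inv_eq_one₀ hne] at this
  exact this

lemma sibuya_pgf {α : ℝ} (hα : α ∈ Set.Ioo (0:ℝ) 1) {u : ℝ} (hu0 : 0 ≤ u) (hu1 : u < 1) :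
    ∑' k, sibuya α k * u ^ k = 1 - (1 - u) ^ α := by
  have hb : Summable (fun k => bcoef α k * u ^ k) := by
    have := summable_bcoef_mul hα (y := u) (by rwa [abs_of_nonneg hu0]) (fun _ => 1)
      (fun k => by rw [abs_one]; linarith [Nat.cast_nonneg (α := ℝ) k])
    simpa using this
  have hi : Summable (fun k : ℕ => if k = 0 then (1:ℝ) else 0) := by
    apply summable_of_ne_finset_zero (s := {0})
    intro k hk
    simp only [Finset.mem_singleton] at hk
    simp [hk]
  have h1 : ∀ k : ℕ, sibuya α k * u ^ k
      = (if k = 0 then (1:ℝ) else 0) - bcoef α k * u ^ k := by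
    intro k
    match k with
    | 0 => simp [sibuya, bcoef_zero]
    | (j+1) =>
      simp only [sibuya, bcoef, if_neg (Nat.succ_ne_zero j), Nat.add_sub_cancel]
      rw [pow_succ]
      ring
  rw [tsum_congr h1, hi.tsum_sub hb, binom_tsum hα ⟨hu0, hu1⟩]
  congr 1
  exact tsum_ite_eq 0 1

lemma step_integral {Ω : Type*} [MeasurableSpace Ω] (μ : Measure Ω) [IsProbabilityMeasure μ]
    {α : ℝ} (hα : α ∈ Set.Ioo (0 : ℝ) 1)
    (Z : ℕ → Ω → ℕ) (hZmeas : ∀ i, Measurable (Z i))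
    (hZindep : iIndepFun Z μ)
    (hZlaw : ∀ i k, (μ {ω | Z i ω = k}).toReal = sibuya α k)
    {pn : ℝ} (hpn : pn ∈ Set.Ioo (0:ℝ) 1)
    (Mn : Ω → ℕ) (hMnmeas : Measurable Mn)
    (hMnlaw : ∀ k : ℕ, 1 ≤ k → (μ {ω | Mn ω = k}).toReal = pn * (1 - pn) ^ (k - 1))
    (hMn0 : (μ {ω | Mn ω = 0}).toReal = 0)
    (hMZ : IndepFun Mn (fun ω => fun i => Z i ω) μ)
    {u : ℝ} (hu0 : 0 < u) (hu1 : u < 1) :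
    ∫ ω, (u : ℝ) ^ (1 + ∑ k ∈ Finset.range (Mn ω - 1), Z k ω) ∂μ
      = pn * u / (pn + (1 - pn) * (1 - u) ^ α) := by
  set g : ℝ := 1 - (1 - u) ^ α with hg_def
  have h1u : 0 < 1 - u := by linarith
  have hXpos : 0 < (1 - u) ^ α := Real.rpow_pos_of_pos h1u α
  have hXle : (1 - u) ^ α ≤ 1 := Real.rpow_le_one h1u.le (by linarith) hα.1.le
  have hg0 : 0 ≤ g := by simp only [hg_def]; linarith
  have hg1 : g < 1 := by simp only [hg_def]; linarith
  have hpow_meas : Measurable (fun m : ℕ => u ^ m) := measurable_from_top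
  have hW : ∀ i, Measurable (fun ω => u ^ Z i ω) := fun i => hpow_meas.comp (hZmeas i)
  -- (a) pgf of each Z i
  have hpgf : ∀ i, ∫ ω, u ^ Z i ω ∂μ = g := by
    intro i
    have hmapZ : IsProbabilityMeasure (μ.map (Z i)) :=
      Measure.isProbabilityMeasure_map (hZmeas i).aemeasurable
    have hint : Integrable (fun m : ℕ => u ^ m) (μ.map (Z i)) := by
      refine (integrable_const (1:ℝ)).mono' hpow_meas.aestronglyMeasurable ?_
      filter_upwards with m
      rw [Real.norm_eq_abs, abs_of_nonneg (pow_nonneg hu0.le m)]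
      exact pow_le_one₀ hu0.le hu1.le
    rw [← integral_map (hZmeas i).aemeasurable hpow_meas.aestronglyMeasurable,
      integral_countable' hint]
    have hsingle : ∀ k : ℕ, ((μ.map (Z i)) {k}).toReal = sibuya α k := by
      intro k
      rw [Measure.map_apply (hZmeas i) (measurableSet_singleton k)]
      exact hZlaw i k
    calc ∑' k, ((μ.map (Z i)) {k}).toReal • u ^ k = ∑' k, sibuya α k * u ^ k := by
          apply tsum_congr; intro k; rw [hsingle k, smul_eq_mul]
      _ = g := sibuya_pgf hα hu0.le hu1
  -- (b) product
  have hprod : ∀ r : ℕ, ∫ ω, ∏ k ∈ Finset.range r, u ^ Z k ω ∂μ = g ^ r := by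
    intro r
    induction r with
    | zero => simp
    | succ r ih =>
      have hWindep : iIndepFun (fun i ω => u ^ Z i ω) μ :=
        hZindep.comp (fun _ (m : ℕ) => u ^ m) (fun _ => hpow_meas)
      have hindep : IndepFun (∏ j ∈ Finset.range r, (fun ω => u ^ Z j ω))
          (fun ω => u ^ Z r ω) μ :=
        hWindep.indepFun_finsetProd_of_notMem hW Finset.notMem_range_self
      have happ : ∀ ω, (∏ j ∈ Finset.range r, (fun ω' => u ^ Z j ω')) ω
          = ∏ j ∈ Finset.range r, u ^ Z j ω := fun ω => Finset.prod_apply ω _ _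
      have hPmeas : Measurable (∏ j ∈ Finset.range r, (fun ω' => u ^ Z j ω')) := by
        have := Finset.measurable_prod (Finset.range r) (fun i _ => hW i)
        convert this using 1
        funext ω
        exact happ ω
      have hmul := hindep.integral_mul_eq_mul_integral hPmeas.aestronglyMeasurable
        ((hW r).aestronglyMeasurable)
      have hLHS : ∫ ω, ∏ k ∈ Finset.range (r+1), u ^ Z k ω ∂μ
          = ∫ ω, ((∏ j ∈ Finset.range r, (fun ω' => u ^ Z j ω')) * (fun ω' => u ^ Z r ω')) ω ∂μ := by
        apply integral_congr_ae
        filter_upwards with ω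
        rw [Pi.mul_apply, happ ω, Finset.prod_range_succ]
      rw [hLHS]
      calc ∫ ω, ((∏ j ∈ Finset.range r, (fun ω' => u ^ Z j ω')) * (fun ω' => u ^ Z r ω')) ω ∂μ
          = (∫ ω, (∏ j ∈ Finset.range r, (fun ω' => u ^ Z j ω')) ω ∂μ) * ∫ ω, u ^ Z r ω ∂μ := hmul
        _ = (∫ ω, ∏ j ∈ Finset.range r, u ^ Z j ω ∂μ) * g := by
            rw [hpgf r]
            congr 1
            apply integral_congr_ae
            filter_upwards with ω
            rw [happ ω]
        _ = g ^ r * g := by rw [ih]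
        _ = g ^ (r+1) := (pow_succ g r).symm
  -- (c) condition on Mn
  have hZv : Measurable (fun ω => fun i => Z i ω) := measurable_pi_lambda _ hZmeas
  set F : ℕ × (ℕ → ℕ) → ℝ := fun q => u ^ (1 + ∑ k ∈ Finset.range (q.1 - 1), q.2 k) with hF_def
  have hFmeas : Measurable F := by
    have hF' : Measurable (fun q : (ℕ → ℕ) × ℕ => F (q.2, q.1)) := by
      apply measurable_from_prod_countable_left
      intro m
      show Measurable fun z : ℕ → ℕ => u ^ (1 + ∑ k ∈ Finset.range (m - 1), z k)
      exact hpow_meas.comp (measurable_const.add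
        (Finset.measurable_sum _ (fun k _ => measurable_pi_apply k)))
    have : F = (fun q : (ℕ → ℕ) × ℕ => F (q.2, q.1)) ∘ Prod.swap := rfl
    rw [this]
    exact hF'.comp measurable_swap
  have hFbdd : ∀ q, ‖F q‖ ≤ 1 := by
    intro q
    show ‖u ^ (1 + ∑ k ∈ Finset.range (q.1 - 1), q.2 k)‖ ≤ 1
    rw [Real.norm_eq_abs, abs_of_nonneg (pow_nonneg hu0.le _)]
    exact pow_le_one₀ hu0.le hu1.le
  have hmapM : IsProbabilityMeasure (μ.map Mn) := Measure.isProbabilityMeasure_map hMnmeas.aemeasurable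
  have hmapZv : IsProbabilityMeasure (μ.map (fun ω => fun i => Z i ω)) :=
    Measure.isProbabilityMeasure_map hZv.aemeasurable
  have hpair : μ.map (fun ω => (Mn ω, fun i => Z i ω))
      = (μ.map Mn).prod (μ.map (fun ω => fun i => Z i ω)) :=
    (indepFun_iff_map_prod_eq_prod_map_map hMnmeas.aemeasurable hZv.aemeasurable).mp hMZ
  have hFint : Integrable F ((μ.map Mn).prod (μ.map (fun ω => fun i => Z i ω))) := by
    refine (integrable_const (1:ℝ)).mono' hFmeas.aestronglyMeasurable ?_
    filter_upwards with q using hFbdd q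
  have e0 : ∫ ω, (u : ℝ) ^ (1 + ∑ k ∈ Finset.range (Mn ω - 1), Z k ω) ∂μ
      = ∫ q, F q ∂((μ.map Mn).prod (μ.map (fun ω => fun i => Z i ω))) := by
    rw [← hpair, integral_map (hMnmeas.prodMk hZv).aemeasurable hFmeas.aestronglyMeasurable]
  have e2 : ∀ m : ℕ, ∫ z, F (m, z) ∂(μ.map (fun ω => fun i => Z i ω)) = u * g ^ (m - 1) := by
    intro m
    have hm1 : Measurable (fun z : ℕ → ℕ => F (m, z)) := hFmeas.comp measurable_prodMk_left
    rw [integral_map hZv.aemeasurable hm1.aestronglyMeasurable]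
    have hteq : ∀ ω : Ω, F (m, fun i => Z i ω) = u * ∏ k ∈ Finset.range (m-1), u ^ Z k ω := by
      intro ω
      simp only [hF_def]
      rw [pow_add, pow_one, Finset.prod_pow_eq_pow_sum]
    simp only [hteq]
    rw [integral_const_mul, hprod (m-1)]
  have hout_int : Integrable (fun m : ℕ => u * g ^ (m - 1)) (μ.map Mn) := by
    refine (integrable_const (1:ℝ)).mono' measurable_from_top.aestronglyMeasurable ?_
    filter_upwards with m
    rw [Real.norm_eq_abs, abs_of_nonneg (by positivity)]
    calc u * g ^ (m-1) ≤ 1 * 1 :=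
        mul_le_mul hu1.le (pow_le_one₀ hg0 hg1.le) (by positivity) zero_le_one
      _ = 1 := one_mul 1
  have e3 : ∫ ω, (u : ℝ) ^ (1 + ∑ k ∈ Finset.range (Mn ω - 1), Z k ω) ∂μ
      = ∑' m : ℕ, ((μ.map Mn) {m}).toReal • (u * g ^ (m - 1)) := by
    rw [e0, integral_prod F hFint]
    simp only [e2]
    exact integral_countable' hout_int
  -- (d) geometric sum
  have hMsingle : ∀ m : ℕ, ((μ.map Mn) {m}).toReal = (μ {ω | Mn ω = m}).toReal := by
    intro m
    rw [Measure.map_apply hMnmeas (measurableSet_singleton m)]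
    rfl
  set q : ℝ := (1 - pn) * g with hq_def
  have hq0 : 0 ≤ q := mul_nonneg (by linarith [hpn.2]) hg0
  have hq1 : q < 1 := lt_of_le_of_lt
    (mul_le_of_le_one_left hg0 (by linarith [hpn.1])) hg1
  set h : ℕ → ℝ := fun m => if m = 0 then 0 else (pn * u) * q ^ (m - 1) with hh_def
  have hterm : ∀ m : ℕ, ((μ.map Mn) {m}).toReal • (u * g ^ (m - 1)) = h m := by
    intro m
    rw [hMsingle m, smul_eq_mul]
    match m with
    | 0 => simp [hh_def, hMn0]
    | (j+1) =>
      rw [hMnlaw (j+1) (Nat.succ_le_succ (Nat.zero_le j))]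
      simp only [hh_def, if_neg (Nat.succ_ne_zero j), Nat.add_sub_cancel, hq_def]
      rw [mul_pow]
      ring
  have hsumh : Summable h := by
    rw [← summable_nat_add_iff 1]
    have : (fun j : ℕ => h (j + 1)) = fun j => (pn * u) * q ^ j := by
      funext j
      simp [hh_def]
    rw [this]
    exact (summable_geometric_of_lt_one hq0 hq1).mul_left _
  have e4 : ∑' m : ℕ, ((μ.map Mn) {m}).toReal • (u * g ^ (m - 1))
      = (pn * u) * (1 - q)⁻¹ := by
    rw [tsum_congr hterm, hsumh.tsum_eq_zero_add]
    have h0 : h 0 = 0 := by simp [hh_def]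
    have h1 : (fun j : ℕ => h (j + 1)) = fun j => (pn * u) * q ^ j := by
      funext j
      simp [hh_def]
    rw [h0, h1, zero_add, tsum_mul_left, tsum_geometric_of_lt_one hq0 hq1]
  rw [e3, e4]
  have hden : 1 - q = pn + (1 - pn) * (1 - u) ^ α := by
    simp only [hq_def, hg_def]
    ring
  rw [hden, div_eq_mul_inv]

/-- Fix `α ∈ (0,1)` and `λ > 0`. Let
`J^{B(n)} = 1/n + (1/n) ∑_{j=1}^{M n - 1} Z j`, where the `Z j` are i.i.d. Sibuya(α) and
`M n` is an independent geometric random variable with success probability `p n` satisfying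
`p n / (1 - p n) = λ / n^α`. Then for every `s ≥ 0`,
`lim_{n→∞} E[exp (-s J^{B(n)})] = λ/(λ + s^α)`,
the Laplace transform of the Mittag-Leffler distribution. -/
theorem fractional_bernoulli_laplace_limit
    {Ω : Type*} [MeasurableSpace Ω] (μ : Measure Ω) [IsProbabilityMeasure μ]
    (α : ℝ) (hα : α ∈ Set.Ioo (0 : ℝ) 1) (lam : ℝ) (hlam : 0 < lam)
    (Z : ℕ → Ω → ℕ) (hZmeas : ∀ i, Measurable (Z i))
    (hZindep : iIndepFun Z μ)
    (hZlaw : ∀ i k, (μ {ω | Z i ω = k}).toReal = sibuya α k)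
    (p : ℕ → ℝ) (hp : ∀ n : ℕ, 1 ≤ n → p n ∈ Set.Ioo (0 : ℝ) 1)
    (hpn : ∀ n : ℕ, 1 ≤ n → p n / (1 - p n) = lam / (n : ℝ) ^ α)
    (M : ℕ → Ω → ℕ) (hMmeas : ∀ n, Measurable (M n))
    (hMlaw : ∀ n k : ℕ, 1 ≤ n → 1 ≤ k →
      (μ {ω | M n ω = k}).toReal = p n * (1 - p n) ^ (k - 1))
    (hM0 : ∀ n : ℕ, 1 ≤ n → (μ {ω | M n ω = 0}).toReal = 0)
    (hMZ : ∀ n, IndepFun (M n) (fun ω => fun i => Z i ω) μ)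
    (s : ℝ) (hs : 0 ≤ s) :
    Tendsto (fun n : ℕ =>
        ∫ ω, Real.exp (-s * ((1 + ∑ k ∈ Finset.range (M n ω - 1), Z k ω : ℕ) : ℝ) / n) ∂μ)
      atTop (nhds (lam / (lam + s ^ α))) := by
  rcases eq_or_lt_of_le hs with hs0 | hs0
  · -- case s = 0
    subst hs0
    have h1 : lam / (lam + (0:ℝ) ^ α) = 1 := by
      rw [Real.zero_rpow (ne_of_gt hα.1), add_zero, div_self (ne_of_gt hlam)]
    rw [h1]
    have h2 : ∀ n : ℕ,
        (∫ ω, Real.exp (-(0:ℝ) * ((1 + ∑ k ∈ Finset.range (M n ω - 1), Z k ω : ℕ) : ℝ) / n) ∂μ)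
        = 1 := by
      intro n
      simp [Real.exp_zero]
    simp only [h2]
    exact tendsto_const_nhds
  · -- case s > 0
    have hs_ne : s ≠ 0 := ne_of_gt hs0
    have hcast : ∀ n : ℕ, 1 ≤ n → (0:ℝ) < n := by
      intro n hn
      exact_mod_cast Nat.lt_of_lt_of_le Nat.zero_lt_one hn
    have hun0 : ∀ n : ℕ, 0 < Real.exp (-(s / n)) := fun n => Real.exp_pos _
    have hun1 : ∀ n : ℕ, 1 ≤ n → Real.exp (-(s / n)) < 1 := by
      intro n hn
      rw [Real.exp_lt_one_iff]
      have : 0 < s / n := div_pos hs0 (hcast n hn)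
      linarith
    -- main identity
    have main : ∀ n : ℕ, 1 ≤ n →
        (∫ ω, Real.exp (-s * ((1 + ∑ k ∈ Finset.range (M n ω - 1), Z k ω : ℕ) : ℝ) / n) ∂μ)
        = Real.exp (-(s / n)) * lam
          / (lam + ((n : ℝ) * (1 - Real.exp (-(s / n)))) ^ α) := by
      intro n hn
      have hn0 : (0:ℝ) < n := hcast n hn
      have hint_eq : ∀ ω,
          Real.exp (-s * ((1 + ∑ k ∈ Finset.range (M n ω - 1), Z k ω : ℕ) : ℝ) / n)
          = Real.exp (-(s / n)) ^ (1 + ∑ k ∈ Finset.range (M n ω - 1), Z k ω) := by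
        intro ω
        rw [← Real.exp_nat_mul]
        congr 1
        ring
      simp only [hint_eq]
      rw [step_integral μ hα Z hZmeas hZindep hZlaw (hp n hn) (M n) (hMmeas n)
        (fun k hk => hMlaw n k hn hk) (hM0 n hn) (hMZ n) (hun0 n) (hun1 n hn)]
      -- algebra
      obtain ⟨hp0, hp1⟩ := hp n hn
      set u : ℝ := Real.exp (-(s / n)) with hu_def
      have h1u : 0 < 1 - u := by linarith [hun1 n hn]
      have hX0 : 0 < (1 - u) ^ α := Real.rpow_pos_of_pos h1u α
      have hnα : (0:ℝ) < (n:ℝ) ^ α := Real.rpow_pos_of_pos hn0 α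
      have hcross : p n * (n:ℝ) ^ α = lam * (1 - p n) := by
        have h := hpn n hn
        rw [div_eq_div_iff (by linarith) (ne_of_gt hnα)] at h
        linarith [h]
      have hmulr : ((n : ℝ) * (1 - u)) ^ α = (n:ℝ) ^ α * (1 - u) ^ α :=
        Real.mul_rpow hn0.le h1u.le
      rw [hmulr]
      have hd1 : 0 < p n + (1 - p n) * (1 - u) ^ α := by
        have : 0 ≤ (1 - p n) * (1 - u) ^ α := mul_nonneg (by linarith) hX0.le
        linarith
      have hd2 : 0 < lam + (n:ℝ) ^ α * (1 - u) ^ α := by positivity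
      rw [div_eq_div_iff (ne_of_gt hd1) (ne_of_gt hd2)]
      linear_combination (u * (1 - u) ^ α) * hcross
    -- the limit
    have htend_t : Tendsto (fun n : ℕ => s / n) atTop (nhds 0) :=
      tendsto_const_div_atTop_nhds_zero_nat s
    have hu_tend : Tendsto (fun n : ℕ => Real.exp (-(s / n))) atTop (nhds 1) := by
      have h1 : Tendsto (fun n : ℕ => -(s/n)) atTop (nhds 0) := by simpa using htend_t.neg
      have := (Real.continuous_exp.continuousAt (x := (0:ℝ))).tendsto.comp h1
      simpa [Real.exp_zero, Function.comp_def] using this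
    have hw : Tendsto (fun n : ℕ => (n : ℝ) * (1 - Real.exp (-(s / n)))) atTop (nhds s) := by
      have hfd : HasDerivAt (fun t : ℝ => 1 - Real.exp (-t)) 1 0 := by
        have h1 : HasDerivAt (fun t : ℝ => -t) (-1) 0 := (hasDerivAt_id 0).neg
        have h2 := (Real.hasDerivAt_exp (-0)).comp 0 h1
        have h3 : HasDerivAt (fun t : ℝ => Real.exp (-t)) (-1) 0 := by
          simpa [Real.exp_zero, Function.comp_def] using h2
        simpa using h3.const_sub 1
      have hT : Tendsto (slope (fun t : ℝ => 1 - Real.exp (-t)) 0) (nhdsWithin 0 {x | x ≠ 0})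
          (nhds 1) := hasDerivAt_iff_tendsto_slope.mp hfd
      have ht' : Tendsto (fun n : ℕ => s / n) atTop (nhdsWithin 0 {x | x ≠ 0}) := by
        rw [tendsto_nhdsWithin_iff]
        refine ⟨htend_t, ?_⟩
        filter_upwards [eventually_ge_atTop 1] with n hn
        exact (div_pos hs0 (hcast n hn)).ne'
      have hcomp := (hT.comp ht').const_mul s
      have heq : (fun n : ℕ => s * slope (fun t : ℝ => 1 - Real.exp (-t)) 0 (s / n))
          =ᶠ[atTop] fun n : ℕ => (n : ℝ) * (1 - Real.exp (-(s / n))) := by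
        filter_upwards [eventually_ge_atTop 1] with n hn
        have hn0 : (0:ℝ) < n := hcast n hn
        rw [slope_def_field]
        field_simp
        simp only [neg_zero, Real.exp_zero, mul_zero, sub_self, sub_zero]
        exact mul_div_cancel_left₀ _ hs_ne
      have := hcomp.congr' heq
      simpa using this
    have hrpow : Tendsto (fun n : ℕ => ((n : ℝ) * (1 - Real.exp (-(s / n)))) ^ α) atTop
        (nhds (s ^ α)) :=
      ((Real.continuousAt_rpow_const s α (Or.inl hs_ne)).tendsto).comp hw
    have hden : Tendsto (fun n : ℕ => lam + ((n : ℝ) * (1 - Real.exp (-(s / n)))) ^ α) atTop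
        (nhds (lam + s ^ α)) := tendsto_const_nhds.add hrpow
    have hnum : Tendsto (fun n : ℕ => Real.exp (-(s / n)) * lam) atTop (nhds (1 * lam)) :=
      hu_tend.mul_const lam
    have hne : lam + s ^ α ≠ 0 := by
      have : 0 ≤ s ^ α := Real.rpow_nonneg hs α
      positivity
    have hfinal0 := hnum.div hden hne
    rw [one_mul] at hfinal0
    have heq2 : (fun n : ℕ => Real.exp (-(s / n)) * lam
          / (lam + ((n : ℝ) * (1 - Real.exp (-(s / n)))) ^ α))
        =ᶠ[atTop] (fun n : ℕ =>
          ∫ ω, Real.exp (-s * ((1 + ∑ k ∈ Finset.range (M n ω - 1), Z k ω : ℕ) : ℝ) / n) ∂μ) := by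
      filter_upwards [eventually_ge_atTop 1] with n hn
      exact (main n hn).symm
    exact hfinal0.congr' heq2
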